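/- Let n ≥ 2, m ≥ 1, and let L be an injective length distribution of length m (all entries of L distinct) with UD_n(L) nonempty. Then ρ_{n,L} = |PR_n(L)|/|UD_n(L)| ≥ ϖ_{n,m}, where ϖ_{n,m} := ∏_{i=1}^{m−1} (1 − (1 − n^{−i})/(n−1)). -/

import Mathlib

open Finset Filter Topology

/-- A code `(v 0, …, v (m-1))` is *uniquely decodable* if any two nonempty sequences of
indices whose corresponding concatenations of code words coincide are equal. -/
def IsUDCode {X : Type*} {m : ℕ} (v : Fin m → List X) : Prop :=
  ∀ s t : List (Fin m), s ≠ [] → t ≠ [] →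
    (s.map v).flatten = (t.map v).flatten → s = t

/-- A *prefix code*: an injective sequence of nonempty words where no code word
is a prefix of another. -/
def IsPrefixCode {X : Type*} {m : ℕ} (v : Fin m → List X) : Prop :=
  Function.Injective v ∧ (∀ i, v i ≠ []) ∧ ∀ i j, i ≠ j → ¬ v i <+: v j

/-- The set of uniquely decodable codes over an `n`-letter alphabet with
length distribution `L`. -/
def UD (n : ℕ) {m : ℕ} (L : Fin m → ℕ) : Set (Fin m → List (Fin n)) :=
  {v | (∀ i, (v i).length = L i) ∧ IsUDCode v}

/-- The set of prefix codes over an `n`-letter alphabet with length distribution `L`. -/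
def PR (n : ℕ) {m : ℕ} (L : Fin m → ℕ) : Set (Fin m → List (Fin n)) :=
  {v | (∀ i, (v i).length = L i) ∧ IsPrefixCode v}

/-- `ρ_{n,L} = |PR_n(L)| / |UD_n(L)|`. -/
noncomputable def rho (n : ℕ) {m : ℕ} (L : Fin m → ℕ) : ℝ :=
  ((PR n L).ncard : ℝ) / ((UD n L).ncard : ℝ)

/-- `ξ_{n,m} = inf_{L ∈ ℒ_{n,m}} ρ_{n,L}`. -/
noncomputable def xi (n m : ℕ) : ℝ :=
  sInf {r : ℝ | ∃ L : Fin m → ℕ, (∀ i, 1 ≤ L i) ∧ (UD n L).Nonempty ∧ r = rho n L}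

/-- `ς_{n,m} = (n - (m mod (n-1))) / n^{⌊m/(n-1)⌋ + 1}`. -/
noncomputable def varsigma (n m : ℕ) : ℝ :=
  ((n : ℝ) - (m % (n - 1) : ℕ)) / (n : ℝ) ^ (m / (n - 1) + 1)

/-- `q_{n,m}`: `1` if `n ≥ m`, and `(m-1)!/(m-1)^{m-1}` if `n < m`. -/
noncomputable def qnm (n m : ℕ) : ℝ :=
  if m ≤ n then 1 else (Nat.factorial (m - 1) : ℝ) / ((m - 1 : ℕ) : ℝ) ^ (m - 1)

/-- `ϖ_{n,m} = ∏_{i=1}^{m-1} (1 - (1 - n^{-i})/(n-1))`. -/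
noncomputable def varpi (n m : ℕ) : ℝ :=
  ∏ i ∈ Finset.Icc 1 (m - 1), (1 - (1 - 1 / (n : ℝ) ^ i) / ((n : ℝ) - 1))

/-- `η_{n,m} = 1 + Σ_{i=1}^{m-1} C(m-1,i)/(n^i - 1)`. -/
noncomputable def eta (n m : ℕ) : ℝ :=
  1 + ∑ i ∈ Finset.Icc 1 (m - 1), ((m - 1).choose i : ℝ) / ((n : ℝ) ^ i - 1)

lemma count_ext (n A : ℕ) (w : List (Fin n)) (hw : w.length ≤ A) :
    ((univ.filter (fun u : List.Vector (Fin n) A => w <+: u.toList)).card)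
      = n ^ (A - w.length) := by
  have : (univ.filter (fun u : List.Vector (Fin n) A => w <+: u.toList)).card
      = (univ : Finset (List.Vector (Fin n) (A - w.length))).card := by
    apply Finset.card_bij' (i := fun u hu => (⟨u.1.drop w.length, by
        simp [u.2]⟩ : List.Vector (Fin n) (A - w.length)))
      (j := fun z _ => (⟨w ++ z.1, by simp [z.2]; omega⟩ : List.Vector (Fin n) A))
    · intro u hu
      replace hu : w <+: List.Vector.toList u := ((@Finset.mem_filter _ (fun u : List.Vector (Fin n) A => w <+: u.toList) (fun a => List.instDecidableIsPrefixOfDecidableEq w a.toList) _ _).mp hu).2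
      obtain ⟨t, ht⟩ := hu
      apply Subtype.ext
      show w ++ (u.1.drop w.length) = u.1
      have ht' : w ++ t = u.1 := ht
      rw [← ht', List.drop_left]
    · intro z hz
      apply Subtype.ext
      show (w ++ z.1).drop w.length = z.1
      rw [List.drop_left]
    · intro u hu
      apply Finset.mem_univ (α := List.Vector (Fin n) (A - w.length))
    · intro z hz
      refine (@Finset.mem_filter _ (fun u : List.Vector (Fin n) A => w <+: u.toList) (fun a => List.instDecidableIsPrefixOfDecidableEq w a.toList) _ _).mpr ⟨Finset.mem_univ (α := List.Vector (Fin n) A) _, ?_⟩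
      exact ⟨_, rfl⟩
  rw [this, Finset.card_univ, card_vector, Fintype.card_fin]


lemma count_good (n A k : ℕ) (w : Fin k → List (Fin n)) (hw : ∀ j, (w j).length ≤ A) :
    (n:ℝ)^A - ∑ j, (n:ℝ)^(A - (w j).length) ≤
      ((univ.filter (fun u : List.Vector (Fin n) A => ∀ j, ¬ w j <+: u.toList)).card : ℝ) := by
  classical
  set P : List.Vector (Fin n) A → Prop := fun u => ∀ j, ¬ w j <+: u.toList with hP
  have hbad : (univ.filter (fun u => ¬ P u)).card ≤ ∑ j, n ^ (A - (w j).length) := by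
    have hsub : (univ.filter (fun u => ¬ P u)) ⊆
        univ.biUnion (fun j => univ.filter (fun u : List.Vector (Fin n) A =>
          w j <+: u.toList)) := by
      intro u hu
      simp only [Finset.mem_filter, Finset.mem_univ, true_and, hP, not_forall, not_not] at hu
      obtain ⟨j, hj⟩ := hu
      simp only [Finset.mem_biUnion, Finset.mem_filter, Finset.mem_univ, true_and]
      exact ⟨j, hj⟩
    calc (univ.filter (fun u => ¬ P u)).card ≤ _ := Finset.card_le_card hsub
      _ ≤ ∑ j, (univ.filter (fun u : List.Vector (Fin n) A =>
            w j <+: u.toList)).card := Finset.card_biUnion_le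
      _ = ∑ j, n ^ (A - (w j).length) := by
          exact Finset.sum_congr rfl fun j _ => count_ext n A (w j) (hw j)
  have htot : (univ.filter P).card + (univ.filter (fun u => ¬ P u)).card
      = Fintype.card (List.Vector (Fin n) A) := by
    rw [Finset.card_filter_add_card_filter_not, Finset.card_univ]
  have hcard : Fintype.card (List.Vector (Fin n) A) = n ^ A := by
    rw [card_vector, Fintype.card_fin]
  have h1 : ((univ.filter (fun u => ¬ P u)).card : ℝ) ≤ ∑ j, (n:ℝ) ^ (A - (w j).length) := by
    exact_mod_cast hbad
  have h2 : ((univ.filter P).card : ℝ) + ((univ.filter (fun u => ¬ P u)).card : ℝ)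
      = (n:ℝ)^A := by exact_mod_cast htot.trans hcard
  linarith


noncomputable def PRF (n : ℕ) {m : ℕ} (L : Fin m → ℕ) :
    Finset (∀ i : Fin m, List.Vector (Fin n) (L i)) :=
  @Finset.filter _ (fun v => IsPrefixCode fun i => (v i).toList) (Classical.decPred _) univ

lemma fin_idx_le {m : ℕ} {L : Fin m → ℕ} (hsm : StrictMono L) (hL : ∀ i, 1 ≤ L i)
    (i : Fin m) : (i : ℕ) + 1 ≤ L i := by
  obtain ⟨i, hi⟩ := i
  induction i with
  | zero => exact hL _
  | succ a ih =>
      have ha : a < m := by omega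
      have h1 : L ⟨a, ha⟩ < L ⟨a + 1, hi⟩ := hsm (by simp [Fin.lt_def])
      have h2 := ih ha
      simp only at h2 ⊢
      omega

lemma restrict_pc {X : Type*} {k : ℕ} {v : Fin (k+1) → List X}
    (h : IsPrefixCode v) : IsPrefixCode (fun j : Fin k => v (Fin.castSucc j)) := by
  obtain ⟨hinj, hne, hpre⟩ := h
  refine ⟨?_, fun j => hne _, fun i j hij => hpre _ _ ?_⟩
  · intro a b hab
    exact Fin.castSucc_injective k (hinj hab)
  · exact fun hc => hij (Fin.castSucc_injective k hc)

lemma snoc_pc {n k : ℕ} {L : Fin (k+1) → ℕ} (hsm : StrictMono L) (hL : ∀ i, 1 ≤ L i)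
    (w : ∀ j : Fin k, List.Vector (Fin n) (L (Fin.castSucc j)))
    (hw : IsPrefixCode (fun j => (w j).toList))
    (u : List.Vector (Fin n) (L (Fin.last k)))
    (hu : ∀ j, ¬ (w j).toList <+: u.toList) :
    IsPrefixCode (fun i => ((Fin.snoc w u : ∀ i, List.Vector (Fin n) (L i)) i).toList) := by
  set v : ∀ i : Fin (k+1), List.Vector (Fin n) (L i) := Fin.snoc w u with hv
  have hlen : ∀ i, ((v i).toList).length = L i := fun i => (v i).toList_length
  have hinj : Function.Injective (fun i => (v i).toList) := by
    intro a b hab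
    have hab' : (v a).toList = (v b).toList := hab
    have : L a = L b := by rw [← hlen a, ← hlen b, hab']
    exact hsm.injective this
  refine ⟨hinj, ?_, ?_⟩
  · intro i
    have e1 := hlen i
    have e2 := hL i
    intro hc
    have hc' : (v i).toList = [] := hc
    rw [hc'] at e1
    simp at e1
    omega
  · intro i j hij
    induction i using Fin.lastCases with
    | last =>
        intro hc
        have hc2 : (v (Fin.last k)).toList <+: (v j).toList := hc
        have := hc2.length_le
        rw [hlen, hlen] at this
        induction j using Fin.lastCases with
        | last => exact hij rfl
        | cast j =>
            have hlt := hsm (Fin.castSucc_lt_last j)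
            omega
    | cast i =>
        induction j using Fin.lastCases with
        | last =>
            have h1 : v (Fin.castSucc i) = w i := Fin.snoc_castSucc ..
            have h2 : v (Fin.last k) = u := Fin.snoc_last ..
            show ¬ (v (Fin.castSucc i)).toList <+: (v (Fin.last k)).toList
            rw [h1, h2]
            exact hu i
        | cast j =>
            have h1 : v (Fin.castSucc i) = w i := Fin.snoc_castSucc ..
            have h2 : v (Fin.castSucc j) = w j := Fin.snoc_castSucc ..
            show ¬ (v (Fin.castSucc i)).toList <+: (v (Fin.castSucc j)).toList
            rw [h1, h2]
            exact hw.2.2 i j (fun hc => hij (by rw [hc]))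


lemma c_nonneg (n : ℕ) (hn : 2 ≤ n) (i : ℕ) :
    0 ≤ 1 - (1 - 1/(n:ℝ)^i)/((n:ℝ)-1) := by
  have hN : (2:ℝ) ≤ n := by exact_mod_cast hn
  have h0 : (0:ℝ) < (n:ℝ)^i := by positivity
  have h1 : 1 - 1/(n:ℝ)^i ≤ 1 := by
    have : 0 ≤ 1/(n:ℝ)^i := by positivity
    linarith
  have h2 : (1 - 1/(n:ℝ)^i)/((n:ℝ)-1) ≤ 1 := by
    rw [div_le_one (by linarith)]
    linarith
  linarith

lemma geom_bound (n k : ℕ) (hn : 2 ≤ n) (Lv : Fin k → ℕ) (hLv : ∀ j : Fin k, (j:ℕ)+1 ≤ Lv j) :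
    ∑ j : Fin k, 1/(n:ℝ)^(Lv j) ≤ (1 - 1/(n:ℝ)^k)/((n:ℝ)-1) := by
  have hN : (2:ℝ) ≤ n := by exact_mod_cast hn
  have hN0 : (n:ℝ) ≠ 0 := by linarith
  set r : ℝ := 1/(n:ℝ) with hr
  have hr0 : 0 ≤ r := by positivity
  have hr1 : r ≤ 1 := by
    rw [hr, div_le_one (by linarith)]; linarith
  have hrne : r ≠ 1 := by
    rw [hr]; intro h; rw [div_eq_one_iff_eq (by linarith)] at h; linarith
  have step1 : ∑ j : Fin k, 1/(n:ℝ)^(Lv j) ≤ ∑ j : Fin k, r^((j:ℕ)+1) := by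
    apply Finset.sum_le_sum
    intro j _
    have : 1/(n:ℝ)^(Lv j) = r^(Lv j) := by rw [hr, one_div, one_div, inv_pow]
    rw [this]
    exact pow_le_pow_of_le_one hr0 hr1 (hLv j)
  have step2 : ∑ j : Fin k, r^((j:ℕ)+1) = r * ∑ j ∈ Finset.range k, r^j := by
    rw [Finset.mul_sum, Fin.sum_univ_eq_sum_range (fun j => r^(j+1))]
    exact Finset.sum_congr rfl fun j _ => by rw [pow_succ, mul_comm]
  have hrk : r^k = 1/(n:ℝ)^k := by rw [hr, div_pow, one_pow]
  have step3 : r * ∑ j ∈ Finset.range k, r^j = (1 - 1/(n:ℝ)^k)/((n:ℝ)-1) := by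
    rw [geom_sum_eq hrne, ← hrk]
    have h1 : (n:ℝ) - 1 ≠ 0 := by linarith
    have h2 : r - 1 ≠ 0 := sub_ne_zero.mpr hrne
    rw [mul_div_assoc', div_eq_div_iff h2 h1, hr]
    field_simp
    ring
  calc ∑ j : Fin k, 1/(n:ℝ)^(Lv j) ≤ ∑ j : Fin k, r^((j:ℕ)+1) := step1
    _ = _ := step2.trans step3

lemma key (n : ℕ) (hn : 2 ≤ n) (m : ℕ) (L : Fin m → ℕ) (hsm : StrictMono L)
    (hL : ∀ i, 1 ≤ L i) :
    ∏ i : Fin m, ((n:ℝ)^(L i) * (1 - (1 - 1/(n:ℝ)^(i:ℕ))/((n:ℝ)-1)))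
      ≤ ((PRF n L).card : ℝ) := by
  classical
  have hN : (2:ℝ) ≤ n := by exact_mod_cast hn
  induction m with
  | zero =>
      have h1 : PRF n L = univ := by
        apply Finset.filter_true_of_mem
        intro v _
        exact ⟨fun a b _ => a.elim0, fun i => i.elim0, fun i j h => i.elim0⟩
      rw [h1]
      simp
  | succ k ih =>
      have hsm' : StrictMono (fun j : Fin k => L (Fin.castSucc j)) := by
        intro a b hab
        exact hsm (by simpa using hab)
      have hL' : ∀ j : Fin k, 1 ≤ L (Fin.castSucc j) := fun j => hL _
      have ihk := ih (fun j => L (Fin.castSucc j)) hsm' hL'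
      set A := L (Fin.last k) with hA
      -- fiber decomposition
      have hres : ∀ v ∈ PRF n L, (fun j : Fin k => v (Fin.castSucc j)) ∈
          PRF n (fun j : Fin k => L (Fin.castSucc j)) := by
        intro v hv
        rw [PRF, Finset.mem_filter] at hv ⊢
        exact ⟨Finset.mem_univ _, restrict_pc hv.2⟩
      have hcard := Finset.card_eq_sum_card_fiberwise hres
      -- the real lower bound D for each fiber
      set D : ℝ := (n:ℝ)^A - ∑ j : Fin k, (n:ℝ)^(A - L (Fin.castSucc j)) with hD
      have hfib : ∀ w ∈ PRF n (fun j : Fin k => L (Fin.castSucc j)),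
          D ≤ (((PRF n L).filter
            (fun v => (fun j : Fin k => v (Fin.castSucc j)) = w)).card : ℝ) := by
        intro w hw
        have hwpc : IsPrefixCode (fun j => (w j).toList) := by
          rw [PRF, Finset.mem_filter] at hw; exact hw.2
        have hlenle : ∀ j : Fin k, ((w j).toList).length ≤ A := by
          intro j
          rw [(w j).toList_length]
          exact le_of_lt (hsm (Fin.castSucc_lt_last j))
        have hcg := count_good n A k (fun j => (w j).toList) hlenle
        have hsumeq : ∑ j : Fin k, (n:ℝ)^(A - ((w j).toList).length)
            = ∑ j : Fin k, (n:ℝ)^(A - L (Fin.castSucc j)) := by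
          apply Finset.sum_congr rfl
          intro j _
          rw [(w j).toList_length]
        rw [hsumeq] at hcg
        refine le_trans hcg ?_
        have hinj : Set.InjOn (fun u : List.Vector (Fin n) A =>
            (Fin.snoc w u : ∀ i : Fin (k+1), List.Vector (Fin n) (L i)))
            (univ.filter (fun u : List.Vector (Fin n) A =>
              ∀ j, ¬ (w j).toList <+: u.toList)) := by
          intro u1 _ u2 _ h
          have := congrFun h (Fin.last k)
          simpa [Fin.snoc_last] using this
        have hmaps : ∀ u ∈ univ.filter (fun u : List.Vector (Fin n) A =>
              ∀ j, ¬ (w j).toList <+: u.toList),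
            (Fin.snoc w u : ∀ i : Fin (k+1), List.Vector (Fin n) (L i)) ∈
              (PRF n L).filter (fun v => (fun j : Fin k => v (Fin.castSucc j)) = w) := by
          intro u hu
          simp only [Finset.mem_filter, Finset.mem_univ, true_and] at hu
          rw [Finset.mem_filter, PRF, Finset.mem_filter]
          refine ⟨⟨Finset.mem_univ _, snoc_pc hsm hL w hwpc u hu⟩, ?_⟩
          funext j
          exact Fin.snoc_castSucc ..
        have := Finset.card_le_card_of_injOn _ hmaps hinj
        exact_mod_cast this
      -- sum up
      have hsum : ((PRF n (fun j : Fin k => L (Fin.castSucc j))).card : ℝ) * D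
          ≤ ((PRF n L).card : ℝ) := by
        rw [hcard]
        push_cast
        calc ((PRF n (fun j : Fin k => L (Fin.castSucc j))).card : ℝ) * D
            = ∑ _w ∈ PRF n (fun j : Fin k => L (Fin.castSucc j)), D := by
              rw [Finset.sum_const, nsmul_eq_mul]
          _ ≤ _ := Finset.sum_le_sum hfib
      -- bound D from below
      have hDge : (n:ℝ)^A * (1 - (1 - 1/(n:ℝ)^k)/((n:ℝ)-1)) ≤ D := by
        rw [hD]
        have hpow : ∀ j : Fin k, (n:ℝ)^(A - L (Fin.castSucc j))
            = (n:ℝ)^A * (1/(n:ℝ)^(L (Fin.castSucc j))) := by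
          intro j
          have hle : L (Fin.castSucc j) ≤ A := le_of_lt (hsm (Fin.castSucc_lt_last j))
          have : (n:ℝ)^(A - L (Fin.castSucc j)) * (n:ℝ)^(L (Fin.castSucc j)) = (n:ℝ)^A := by
            rw [← pow_add, Nat.sub_add_cancel hle]
          have hpos : (0:ℝ) < (n:ℝ)^(L (Fin.castSucc j)) := by positivity
          field_simp
          linarith [this]
        have hsum2 : ∑ j : Fin k, (n:ℝ)^(A - L (Fin.castSucc j))
            = (n:ℝ)^A * ∑ j : Fin k, 1/(n:ℝ)^(L (Fin.castSucc j)) := by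
          rw [Finset.mul_sum]
          exact Finset.sum_congr rfl fun j _ => hpow j
        rw [hsum2]
        have hgb := geom_bound n k hn (fun j => L (Fin.castSucc j))
          (fun j => by simpa using fin_idx_le hsm' hL' j)
        have hApos : (0:ℝ) ≤ (n:ℝ)^A := by positivity
        nlinarith [hgb, hApos]
      -- combine
      rw [Fin.prod_univ_castSucc]
      have hfac : ∀ j : Fin k, ((n:ℝ)^(L (Fin.castSucc j)) *
          (1 - (1 - 1/(n:ℝ)^((Fin.castSucc j : Fin (k+1)) : ℕ))/((n:ℝ)-1)))
          = ((n:ℝ)^(L (Fin.castSucc j)) * (1 - (1 - 1/(n:ℝ)^((j : Fin k) : ℕ))/((n:ℝ)-1))) := by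
        intro j
        simp
      rw [Finset.prod_congr rfl (fun j _ => hfac j)]
      have hlastfac : ((n:ℝ)^(L (Fin.last k)) *
          (1 - (1 - 1/(n:ℝ)^((Fin.last k : Fin (k+1)) : ℕ))/((n:ℝ)-1)))
          = (n:ℝ)^A * (1 - (1 - 1/(n:ℝ)^k)/((n:ℝ)-1)) := by
        rw [Fin.val_last]
      rw [hlastfac]
      have hprodnn : 0 ≤ ∏ j : Fin k, ((n:ℝ)^(L (Fin.castSucc j)) *
          (1 - (1 - 1/(n:ℝ)^((j : Fin k) : ℕ))/((n:ℝ)-1))) := by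
        apply Finset.prod_nonneg
        intro j _
        have := c_nonneg n hn (j : ℕ)
        positivity
      have hlastnn : 0 ≤ (n:ℝ)^A * (1 - (1 - 1/(n:ℝ)^k)/((n:ℝ)-1)) := by
        have := c_nonneg n hn k
        positivity
      calc (∏ j : Fin k, ((n:ℝ)^(L (Fin.castSucc j)) *
            (1 - (1 - 1/(n:ℝ)^((j : Fin k) : ℕ))/((n:ℝ)-1)))) *
            ((n:ℝ)^A * (1 - (1 - 1/(n:ℝ)^k)/((n:ℝ)-1)))
          ≤ ((PRF n (fun j : Fin k => L (Fin.castSucc j))).card : ℝ) * D := by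
            apply mul_le_mul ihk hDge hlastnn (Nat.cast_nonneg _)
        _ ≤ _ := hsum


/-- the embedding of vector tuples into list tuples -/
def emb (n : ℕ) {m : ℕ} (L : Fin m → ℕ) (v : ∀ i : Fin m, List.Vector (Fin n) (L i)) :
    Fin m → List (Fin n) := fun i => (v i).toList

lemma emb_inj (n : ℕ) {m : ℕ} (L : Fin m → ℕ) : Function.Injective (emb n L) := by
  intro a b hab
  funext i
  exact List.Vector.toList_injective (congrFun hab i)

lemma PR_eq_image (n : ℕ) {m : ℕ} (L : Fin m → ℕ) :
    PR n L = emb n L '' ↑(PRF n L) := by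
  ext v
  constructor
  · rintro ⟨hlen, hpc⟩
    refine ⟨fun i => ⟨v i, hlen i⟩, ?_, rfl⟩
    simp only [PRF, Finset.coe_filter, Set.mem_setOf_eq, Finset.mem_univ, true_and]
    exact hpc
  · rintro ⟨u, hu, rfl⟩
    simp only [PRF, Finset.coe_filter, Set.mem_setOf_eq, Finset.mem_univ, true_and] at hu
    exact ⟨fun i => (u i).toList_length, hu⟩

lemma PR_ncard (n : ℕ) {m : ℕ} (L : Fin m → ℕ) : (PR n L).ncard = (PRF n L).card := by
  rw [PR_eq_image, Set.ncard_image_of_injective _ (emb_inj n L), Set.ncard_coe_finset]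

lemma UD_subset (n : ℕ) {m : ℕ} (L : Fin m → ℕ) :
    UD n L ⊆ emb n L '' Set.univ := by
  rintro v ⟨hlen, _⟩
  exact ⟨fun i => ⟨v i, hlen i⟩, Set.mem_univ _, rfl⟩

lemma UD_finite (n : ℕ) {m : ℕ} (L : Fin m → ℕ) : (UD n L).Finite :=
  Set.Finite.subset (Set.Finite.image _ (Set.finite_univ)) (UD_subset n L)

lemma UD_card_le (n : ℕ) {m : ℕ} (L : Fin m → ℕ) :
    (UD n L).ncard ≤ ∏ i : Fin m, n ^ (L i) := by
  have h1 := Set.ncard_le_ncard (UD_subset n L)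
    (Set.Finite.image _ (Set.finite_univ))
  have h2 : (emb n L '' Set.univ).ncard = ∏ i : Fin m, n ^ (L i) := by
    rw [Set.ncard_image_of_injective _ (emb_inj n L), Set.ncard_univ, Nat.card_eq_fintype_card,
      Fintype.card_pi]
    exact Finset.prod_congr rfl fun i _ => by rw [card_vector, Fintype.card_fin]
  omega


lemma pc_comp {X : Type*} {m : ℕ} {v : Fin m → List X} (σ : Equiv.Perm (Fin m))
    (h : IsPrefixCode v) : IsPrefixCode (v ∘ σ) := by
  obtain ⟨hinj, hne, hpre⟩ := h
  refine ⟨hinj.comp σ.injective, fun i => hne _, fun i j hij => hpre _ _ ?_⟩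
  exact fun hc => hij (σ.injective hc)

lemma mem_PR_comp {n m : ℕ} {L : Fin m → ℕ} (σ : Equiv.Perm (Fin m))
    {v : Fin m → List (Fin n)} (h : v ∈ PR n L) : v ∘ σ ∈ PR n (L ∘ σ) :=
  ⟨fun i => h.1 (σ i), pc_comp σ h.2⟩

lemma PR_perm (n m : ℕ) (L : Fin m → ℕ) (σ : Equiv.Perm (Fin m)) :
    (PR n (L ∘ σ)).ncard = (PR n L).ncard := by
  have himg : PR n (L ∘ σ) = (fun v => v ∘ σ) '' PR n L := by
    ext u
    constructor
    · intro hu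
      refine ⟨u ∘ σ.symm, ?_, ?_⟩
      · have := mem_PR_comp σ.symm hu
        have he : (L ∘ σ) ∘ (σ.symm : Fin m → Fin m) = L := by
          funext i; simp
        rwa [he] at this
      · funext i; simp
    · rintro ⟨v, hv, rfl⟩
      exact mem_PR_comp σ hv
  rw [himg]
  apply Set.ncard_image_of_injective
  intro a b hab
  funext i
  have := congrFun hab (σ.symm i)
  simpa using this

lemma prod_c (n m : ℕ) (hm : 1 ≤ m) :
    ∏ i : Fin m, (1 - (1 - 1/(n:ℝ)^(i:ℕ))/((n:ℝ)-1)) = varpi n m := by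
  rw [varpi, Fin.prod_univ_eq_prod_range (fun i => (1 - (1 - 1/(n:ℝ)^i)/((n:ℝ)-1))) m]
  have hr : Finset.range m = insert 0 (Finset.Icc 1 (m-1)) := by
    ext x
    simp only [Finset.mem_range, Finset.mem_insert, Finset.mem_Icc]
    omega
  rw [hr, Finset.prod_insert (by simp)]
  norm_num


/-- Theorem 2 (second part): for an injective `L ∈ ℒ_{n,m}`, `ρ_{n,L} ≥ ϖ_{n,m}`. -/
theorem stmt2 (n m : ℕ) (hn : 2 ≤ n) (hm : 1 ≤ m) (L : Fin m → ℕ)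
    (hL : ∀ i, 1 ≤ L i) (hinj : Function.Injective L) (hud : (UD n L).Nonempty) :
    varpi n m ≤ rho n L := by
  classical
  set σ := Tuple.sort L with hs
  have hinj1 : Function.Injective (L ∘ σ) := hinj.comp σ.injective
  have hsm : StrictMono (L ∘ σ) := (Tuple.monotone_sort L).strictMono_of_injective hinj1
  have hL1 : ∀ i, 1 ≤ (L ∘ σ) i := fun i => hL _
  have hkey := key n hn m (L ∘ σ) hsm hL1
  have hsplit : ∏ i : Fin m, ((n:ℝ)^((L ∘ σ) i) * (1 - (1 - 1/(n:ℝ)^(i:ℕ))/((n:ℝ)-1)))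
      = (∏ i : Fin m, (n:ℝ)^(L i)) * varpi n m := by
    rw [Finset.prod_mul_distrib, prod_c n m hm]
    congr 1
    exact Equiv.prod_comp σ (fun i => (n:ℝ)^(L i))
  rw [hsplit] at hkey
  have hPR : ((PRF n (L ∘ σ)).card : ℝ) = ((PR n L).ncard : ℝ) := by
    rw [← PR_ncard, PR_perm]
  rw [hPR] at hkey
  have hUDfin := UD_finite n L
  have hUDpos : 0 < (UD n L).ncard := (Set.ncard_pos hUDfin).mpr hud
  have hUDle : ((UD n L).ncard : ℝ) ≤ ∏ i : Fin m, (n:ℝ)^(L i) := by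
    have h := UD_card_le n L
    calc ((UD n L).ncard : ℝ) ≤ ((∏ i : Fin m, n ^ (L i) : ℕ) : ℝ) := by exact_mod_cast h
      _ = ∏ i : Fin m, (n:ℝ)^(L i) := by push_cast; rfl
  have hvnn : 0 ≤ varpi n m := by
    apply Finset.prod_nonneg
    intro i _
    exact c_nonneg n hn i
  rw [rho, le_div_iff₀ (by exact_mod_cast hUDpos)]
  calc varpi n m * ((UD n L).ncard : ℝ)
      ≤ varpi n m * ∏ i : Fin m, (n:ℝ)^(L i) :=
        mul_le_mul_of_nonneg_left hUDle hvnn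
    _ = (∏ i : Fin m, (n:ℝ)^(L i)) * varpi n m := mul_comm _ _
    _ ≤ _ := hkey
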